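/- Let G act properly discontinuously by isometries on a δ-hyperbolic graph Γ (with finitely many elements moving any point a bounded amount), and let a, b ∈ G be hyperbolic isometries sharing a common geodesic quasi-axis α. Then there exist integers k, l > 0 with [a, b^k] = 1 and [b, a^l] = 1. -/

import Mathlib

open Filter Metric Set

/-- A geodesic segment from `x` to `y`: the image of an isometric parametrization
of the interval `[0, dist x y]`. -/
def IsGeodesicSegment {X : Type*} [MetricSpace X] (s : Set X) (x y : X) : Prop :=
  ∃ γ : ℝ → X, γ 0 = x ∧ γ (dist x y) = y ∧
    (∀ u ∈ Set.Icc (0:ℝ) (dist x y), ∀ v ∈ Set.Icc (0:ℝ) (dist x y),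
      dist (γ u) (γ v) = |u - v|) ∧ s = γ '' Set.Icc (0:ℝ) (dist x y)

/-- A geodesic metric space: any two points are joined by a geodesic segment. -/
def GeodesicSpace (X : Type*) [MetricSpace X] : Prop :=
  ∀ x y : X, ∃ s : Set X, IsGeodesicSegment s x y

/-- `δ`-hyperbolicity via thin triangles: each side of a geodesic triangle is contained
in the `δ`-neighborhood of the union of the other two sides. -/
def DeltaHyperbolic (X : Type*) [MetricSpace X] (δ : ℝ) : Prop :=
  ∀ x y z : X, ∀ s t u : Set X, IsGeodesicSegment s x y → IsGeodesicSegment t y z →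
    IsGeodesicSegment u x z → ∀ p ∈ u, ∃ q ∈ s ∪ t, dist p q ≤ δ

/-- A bi-infinite geodesic line, parametrized by arclength. -/
def IsGeodesicLine {X : Type*} [MetricSpace X] (α : ℝ → X) : Prop :=
  ∀ s t : ℝ, dist (α s) (α t) = |s - t|

/-- The `10δ`-overlap `α ∩_{10δ} β = (α ∩ N_{10δ}(β)) ∪ (β ∩ N_{10δ}(α))`
of two geodesic lines. -/
def OverlapSet {X : Type*} [MetricSpace X] (δ : ℝ) (α β : ℝ → X) : Set X :=
  (Set.range α ∩ {x | ∃ t : ℝ, dist x (β t) ≤ 10 * δ}) ∪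
  (Set.range β ∩ {x | ∃ t : ℝ, dist x (α t) ≤ 10 * δ})

/-- The group `G` acts on `X` by isometries. -/
def IsometricAction (G X : Type*) [Group G] [MetricSpace X] [MulAction G X] : Prop :=
  ∀ g : G, Isometry (fun x : X => g • x)

/-- Translation length of a group element acting on `X`. -/
def HasTransLength {G : Type*} [Group G] (X : Type*) [MetricSpace X] [MulAction G X]
    (a : G) (τ : ℝ) : Prop :=
  ∀ x : X, Filter.Tendsto (fun n : ℕ => dist x ((a ^ n) • x) / (n : ℝ))
    Filter.atTop (nhds τ)

/-- A (geodesic) quasi-axis of `a`: a geodesic line `α` with `a • α ⊆ N_C(α)` for some `C ≥ 0`. -/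
def IsQuasiAxis {G : Type*} [Group G] {X : Type*} [MetricSpace X] [MulAction G X]
    (a : G) (α : ℝ → X) : Prop :=
  IsGeodesicLine α ∧ ∃ C : ℝ, 0 ≤ C ∧ ∀ t : ℝ, ∃ s : ℝ, dist (a • α t) (α s) ≤ C

/-- Acylindricity at scale `R` with constants `K`, `L`. -/
def AcylAt (G X : Type*) [Group G] [MetricSpace X] [MulAction G X] (R K L : ℝ) : Prop :=
  1 ≤ K ∧ 1 ≤ L ∧ ∀ x y : X, L ≤ dist x y →
    {g : G | dist x (g • x) ≤ R ∧ dist y (g • y) ≤ R}.Finite ∧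
    ({g : G | dist x (g • x) ≤ R ∧ dist y (g • y) ≤ R}.ncard : ℝ) ≤ K

/-- An acylindrical action, with constant functions `K L : ℝ → ℝ`. -/
def Acylindrical (G X : Type*) [Group G] [MetricSpace X] [MulAction G X]
    (K L : ℝ → ℝ) : Prop :=
  ∀ R : ℝ, 0 < R → AcylAt G X R (K R) (L R)

/-- The homomorphism from the rank-2 free group sending the generators to `a` and `b`. -/
def pairMap {G : Type*} [Group G] (a b : G) : FreeGroup Bool →* G :=
  FreeGroup.lift (fun t => if t then a else b)

/-- `a`, `b` generate a free subgroup of rank two. -/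
def FreePair {G : Type*} [Group G] (a b : G) : Prop :=
  Function.Injective (pairMap a b)

/-- The orbit map of `⟨a, b⟩` into `X` is a quasi-isometric embedding
(word metric with respect to `{a, b}`). -/
def OrbitQIE (G X : Type*) [Group G] [MetricSpace X] [MulAction G X] (a b : G) : Prop :=
  ∃ (x : X) (Λ C : ℝ), 0 < Λ ∧ 0 ≤ C ∧ ∀ w : FreeGroup Bool,
    ((FreeGroup.toWord w).length : ℝ) / Λ - C ≤ dist x (pairMap a b w • x) ∧
    dist x (pairMap a b w • x) ≤ Λ * ((FreeGroup.toWord w).length : ℝ) + C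

/-- Two group elements are independent: no nonzero powers commute. -/
def Independent {G : Type*} [Group G] (a b : G) : Prop :=
  ∀ s t : ℤ, s ≠ 0 → t ≠ 0 → a ^ s * b ^ t ≠ b ^ t * a ^ s

lemma sign_triple {δ : ℝ} (hδ0 : 0 ≤ δ) (φ : ℝ → ℝ)
    (H : ∀ t u : ℝ, abs (|φ t - φ u| - |t - u|) ≤ 4 * δ) :
    ∀ v u t : ℝ, 8*δ < u - v → 8*δ < t - u → 0 < (φ u - φ v) * (φ t - φ u) := by
  intro v u t h1 h2
  obtain ⟨l1, r1⟩ := abs_le.mp (H u v)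
  obtain ⟨l2, r2⟩ := abs_le.mp (H t u)
  obtain ⟨l3, r3⟩ := abs_le.mp (H t v)
  rw [abs_of_pos (by linarith : (0:ℝ) < u - v)] at l1 r1
  rw [abs_of_pos (by linarith : (0:ℝ) < t - u)] at l2 r2
  rw [abs_of_pos (by linarith : (0:ℝ) < t - v)] at l3 r3
  rcases abs_cases (φ u - φ v) with ⟨e1, s1⟩ | ⟨e1, s1⟩ <;>
    rcases abs_cases (φ t - φ u) with ⟨e2, s2⟩ | ⟨e2, s2⟩ <;>
      rcases abs_cases (φ t - φ v) with ⟨e3, s3⟩ | ⟨e3, s3⟩ <;>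
        rw [e1] at l1 r1 <;> rw [e2] at l2 r2 <;> rw [e3] at l3 r3 <;>
          first
            | exact mul_pos (by linarith) (by linarith)
            | exact mul_pos_of_neg_of_neg (by linarith) (by linarith)
            | (exfalso; linarith)

lemma mul_pos_cancel {p q r : ℝ} (h1 : 0 < p * q) (h2 : 0 < q * r) : 0 < p * r := by
  rcases mul_pos_iff.mp h1 with ⟨hp, hq⟩ | ⟨hp, hq⟩ <;>
    rcases mul_pos_iff.mp h2 with ⟨hq', hr⟩ | ⟨hq', hr⟩
  · exact mul_pos hp hr
  · linarith
  · linarith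
  · exact mul_pos_of_neg_of_neg hp hr

lemma sign_global {δ : ℝ} (hδ0 : 0 ≤ δ) (φ : ℝ → ℝ)
    (H : ∀ t u : ℝ, abs (|φ t - φ u| - |t - u|) ≤ 4 * δ) :
    ∀ t u t' u' : ℝ, 8*δ < t - u → 8*δ < t' - u' →
      0 < (φ t - φ u) * (φ t' - φ u') := by
  intro t u t' u' h h'
  set w : ℝ := min u u' - (9*δ+1) with hw
  set w' : ℝ := w - (9*δ+1) with hw'
  have hwu : 8*δ < u - w := by
    have := min_le_left u u'; rw [hw]; linarith
  have hwu' : 8*δ < u' - w := by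
    have := min_le_right u u'; rw [hw]; linarith
  have hww' : 8*δ < w - w' := by rw [hw']; linarith
  have S1 := sign_triple hδ0 φ H w' w u hww' hwu
  have S2 := sign_triple hδ0 φ H w u t hwu h
  have S3 := sign_triple hδ0 φ H w' w u' hww' hwu'
  have S4 := sign_triple hδ0 φ H w u' t' hwu' h'
  have P1 : 0 < (φ t - φ u) * (φ w - φ w') := by
    rw [mul_comm]; exact mul_pos_cancel S1 S2
  have P2 : 0 < (φ w - φ w') * (φ t' - φ u') := mul_pos_cancel S3 S4
  exact mul_pos_cancel P1 P2

lemma coarse_linear {δ : ℝ} (hδ0 : 0 ≤ δ) (φ : ℝ → ℝ)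
    (H : ∀ t u : ℝ, abs (|φ t - φ u| - |t - u|) ≤ 4 * δ) :
    ∃ ε : ℝ, (ε = 1 ∨ ε = -1) ∧ ∀ t : ℝ, |φ t - (ε * t + φ 0)| ≤ 20 * δ := by
  have hsg := sign_global hδ0 φ H
  by_cases hpos : 0 < φ (9*δ+1) - φ 0
  · refine ⟨1, Or.inl rfl, fun t => ?_⟩
    rcases le_or_gt t (8*δ) with h1 | h1
    · rcases le_or_gt (-(8*δ)) t with h2 | h2
      · -- |t| ≤ 8δ
        have hb := abs_le.mp (H t 0)
        have h3 : |φ t - φ 0| ≤ |t - 0| + 4*δ := by linarith [hb.2]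
        rw [sub_zero] at h3
        have ht : |t| ≤ 8*δ := abs_le.mpr ⟨by linarith, h1⟩
        have e : φ t - (1*t + φ 0) = (φ t - φ 0) + (-t) := by ring
        rw [e]
        calc |(φ t - φ 0) + (-t)| ≤ |φ t - φ 0| + |(-t)| := abs_add_le _ _
          _ ≤ (|t| + 4*δ) + |t| := by rw [abs_neg]; linarith
          _ ≤ 20*δ := by linarith
      · -- t < -8δ
        have hs := hsg 0 t (9*δ+1) 0 (by linarith) (by linarith)
        have hneg : 0 < φ 0 - φ t := by
          rcases mul_pos_iff.mp hs with ⟨h, _⟩ | ⟨_, h2'⟩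
          · exact h
          · linarith
        have hb := abs_le.mp (H 0 t)
        rw [abs_of_pos hneg, abs_of_pos (by linarith : (0:ℝ) < 0 - t)] at hb
        rw [abs_le]; constructor <;> linarith [hb.1, hb.2]
    · -- 8δ < t
      have hs := hsg t 0 (9*δ+1) 0 (by linarith) (by linarith)
      have hposu : 0 < φ t - φ 0 := by
        rcases mul_pos_iff.mp hs with ⟨h, _⟩ | ⟨_, h2'⟩
        · exact h
        · linarith
      have hb := abs_le.mp (H t 0)
      rw [abs_of_pos hposu, abs_of_pos (by linarith : (0:ℝ) < t - 0)] at hb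
      rw [abs_le]; constructor <;> linarith [hb.1, hb.2]
  · have hne : φ (9*δ+1) - φ 0 < 0 := by
      have hs := hsg (9*δ+1) 0 (9*δ+1) 0 (by linarith) (by linarith)
      rcases mul_pos_iff.mp hs with ⟨h, _⟩ | ⟨h, _⟩
      · exact absurd h hpos
      · exact h
    refine ⟨-1, Or.inr rfl, fun t => ?_⟩
    rcases le_or_gt t (8*δ) with h1 | h1
    · rcases le_or_gt (-(8*δ)) t with h2 | h2
      · have hb := abs_le.mp (H t 0)
        have h3 : |φ t - φ 0| ≤ |t - 0| + 4*δ := by linarith [hb.2]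
        rw [sub_zero] at h3
        have ht : |t| ≤ 8*δ := abs_le.mpr ⟨by linarith, h1⟩
        have e : φ t - ((-1)*t + φ 0) = (φ t - φ 0) + t := by ring
        rw [e]
        calc |(φ t - φ 0) + t| ≤ |φ t - φ 0| + |t| := abs_add_le _ _
          _ ≤ (|t| + 4*δ) + |t| := by linarith
          _ ≤ 20*δ := by linarith
      · -- t < -8δ : φ t - φ 0 > 0 here (reversing)
        have hs := hsg 0 t (9*δ+1) 0 (by linarith) (by linarith)
        have hneg : φ 0 - φ t < 0 := by
          rcases mul_pos_iff.mp hs with ⟨_, h'⟩ | ⟨h', _⟩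
          · linarith
          · exact h'
        have hb := abs_le.mp (H 0 t)
        rw [abs_of_neg hneg, abs_of_pos (by linarith : (0:ℝ) < 0 - t)] at hb
        rw [abs_le]; constructor <;> linarith [hb.1, hb.2]
    · -- 8δ < t : φ t - φ 0 < 0
      have hs := hsg t 0 (9*δ+1) 0 (by linarith) (by linarith)
      have hposu : φ t - φ 0 < 0 := by
        rcases mul_pos_iff.mp hs with ⟨_, h'⟩ | ⟨h', _⟩
        · linarith
        · exact h'
      have hb := abs_le.mp (H t 0)
      rw [abs_of_neg hposu, abs_of_pos (by linarith : (0:ℝ) < t - 0)] at hb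
      rw [abs_le]; constructor <;> linarith [hb.1, hb.2]

lemma delta_nonneg {X : Type*} [MetricSpace X] {δ : ℝ} (x : X)
    (hgeo : GeodesicSpace X) (hδ : DeltaHyperbolic X δ) : 0 ≤ δ := by
  obtain ⟨s, hs⟩ := hgeo x x
  obtain ⟨γ, h0, hd, hisom, him⟩ := hs
  have hx : x ∈ s := by
    rw [him]
    exact ⟨0, ⟨le_refl _, by simp⟩, h0⟩
  obtain ⟨q, hq, hdq⟩ := hδ x x x s s s ⟨γ, h0, hd, hisom, him⟩
    ⟨γ, h0, hd, hisom, him⟩ ⟨γ, h0, hd, hisom, him⟩ x hx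
  have hqx : q = x := by
    rcases hq with hq | hq <;>
    · rw [him] at hq
      obtain ⟨u, hu, rfl⟩ := hq
      have hu0 : u = 0 := le_antisymm (by simpa using hu.2) hu.1
      rw [hu0, h0]
  rw [hqx, dist_self] at hdq
  exact hdq

lemma line_subsegment {X : Type*} [MetricSpace X] {α : ℝ → X} (hα : IsGeodesicLine α)
    (s₁ s₂ : ℝ) :
    ∃ s : Set X, IsGeodesicSegment s (α s₁) (α s₂) ∧ (∀ p ∈ s, ∃ u, p = α u) ∧
      (∀ u, min s₁ s₂ ≤ u → u ≤ max s₁ s₂ → α u ∈ s) := by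
  rcases le_total s₁ s₂ with h | h
  · have hd : dist (α s₁) (α s₂) = s₂ - s₁ := by
      rw [hα, abs_of_nonpos (by linarith)]; ring
    refine ⟨α '' Set.Icc s₁ s₂, ⟨fun u => α (s₁ + u), by simp, ?_, ?_, ?_⟩, ?_, ?_⟩
    · rw [hd]; congr 1; ring
    · intro u _ v _
      rw [hα]; congr 1; ring
    · rw [hd]
      ext y
      constructor
      · rintro ⟨v, hv, rfl⟩
        exact ⟨v - s₁, ⟨by linarith [hv.1], by linarith [hv.2]⟩, by congr 1; ring⟩
      · rintro ⟨u, hu, rfl⟩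
        exact ⟨s₁ + u, ⟨by linarith [hu.1], by linarith [hu.2]⟩, rfl⟩
    · rintro p ⟨v, _, rfl⟩
      exact ⟨v, rfl⟩
    · intro u hu1 hu2
      rw [min_eq_left h] at hu1
      rw [max_eq_right h] at hu2
      exact ⟨u, ⟨hu1, hu2⟩, rfl⟩
  · have hd : dist (α s₁) (α s₂) = s₁ - s₂ := by
      rw [hα, abs_of_nonneg (by linarith)]
    refine ⟨α '' Set.Icc s₂ s₁, ⟨fun u => α (s₁ - u), by simp, ?_, ?_, ?_⟩, ?_, ?_⟩
    · rw [hd]; congr 1; ring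
    · intro u _ v _
      rw [hα]
      have : s₁ - u - (s₁ - v) = -(u - v) := by ring
      rw [this, abs_neg]
    · rw [hd]
      ext y
      constructor
      · rintro ⟨v, hv, rfl⟩
        exact ⟨s₁ - v, ⟨by linarith [hv.2], by linarith [hv.1]⟩, by congr 1; ring⟩
      · rintro ⟨u, hu, rfl⟩
        exact ⟨s₁ - u, ⟨by linarith [hu.2], by linarith [hu.1]⟩, rfl⟩
    · rintro p ⟨v, _, rfl⟩
      exact ⟨v, rfl⟩
    · intro u hu1 hu2
      rw [min_eq_right h] at hu1
      rw [max_eq_left h] at hu2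
      exact ⟨u, ⟨hu1, hu2⟩, rfl⟩

lemma quad {X : Type*} [MetricSpace X] {δ : ℝ} (hgeo : GeodesicSpace X)
    (hδ : DeltaHyperbolic X δ) {α : ℝ → X} (hα : IsGeodesicLine α)
    {x' y' : X} {s₁ s₂ C : ℝ}
    (h₁ : dist x' (α s₁) ≤ C) (h₂ : dist y' (α s₂) ≤ C)
    {seg : Set X} (hseg : IsGeodesicSegment seg x' y') {p : X} (hp : p ∈ seg) :
    dist p x' ≤ C + δ ∨ dist p y' ≤ C + 2*δ ∨ ∃ s, dist p (α s) ≤ 2*δ := by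
  obtain ⟨s, hs⟩ := hgeo x' (α s₁)
  obtain ⟨w, hw⟩ := hgeo (α s₁) y'
  obtain ⟨q, hq, hpq⟩ := hδ x' (α s₁) y' s w seg hs hw hseg p hp
  rcases hq with hq | hq
  · -- q on the short side [x', α s₁]
    left
    obtain ⟨γ, h0, hd, hisom, him⟩ := hs
    rw [him] at hq
    obtain ⟨u, hu, rfl⟩ := hq
    have hqx : dist (γ u) x' = u := by
      rw [← h0, hisom u hu 0 ⟨le_refl _, dist_nonneg⟩, sub_zero, abs_of_nonneg hu.1]
    calc dist p x' ≤ dist p (γ u) + dist (γ u) x' := dist_triangle _ _ _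
      _ ≤ δ + u := by linarith [hqx, hpq]
      _ ≤ δ + C := by linarith [hu.2, h₁]
      _ = C + δ := by ring
  · -- q on side [α s₁, y']
    obtain ⟨aseg, haseg, hamem, _⟩ := line_subsegment hα s₁ s₂
    obtain ⟨t2, ht2⟩ := hgeo (α s₂) y'
    obtain ⟨r, hr, hqr⟩ := hδ (α s₁) (α s₂) y' aseg t2 w haseg ht2 hw q hq
    rcases hr with hr | hr
    · -- r on α
      right; right
      obtain ⟨v, rfl⟩ := hamem r hr
      exact ⟨v, by
        calc dist p (α v) ≤ dist p q + dist q (α v) := dist_triangle _ _ _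
          _ ≤ 2*δ := by linarith [hpq, hqr]⟩
    · -- r on short side [α s₂, y']
      right; left
      obtain ⟨γ, h0, hd, hisom, him⟩ := ht2
      rw [him] at hr
      obtain ⟨u, hu, rfl⟩ := hr
      have hry : dist (γ u) y' = dist (α s₂) y' - u := by
        have h5 := hisom u hu (dist (α s₂) y') ⟨dist_nonneg, le_refl _⟩
        rw [hd] at h5
        rw [h5, abs_of_nonpos (by linarith [hu.2])]
        ring
      have hd2 : dist (α s₂) y' ≤ C := by rw [dist_comm]; exact h₂
      calc dist p y' ≤ dist p q + dist q (γ u) + dist (γ u) y' := dist_triangle4 _ _ _ _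
        _ ≤ δ + δ + (dist (α s₂) y' - u) := by linarith [hpq, hqr, hry]
        _ ≤ C + 2*δ := by linarith [hu.1]


lemma smul_dist' {G X : Type*} [Group G] [MetricSpace X] [MulAction G X]
    (hiso : IsometricAction G X) (g : G) (x y : X) :
    dist (g • x) (g • y) = dist x y := (hiso g).dist_eq x y

lemma near_of_bounded {X : Type*} [MetricSpace X] {δ : ℝ} (hδ0 : 0 ≤ δ)
    (hgeo : GeodesicSpace X) (hδ : DeltaHyperbolic X δ) {α : ℝ → X}
    (hα : IsGeodesicLine α) (f : X → X) (hf : Isometry f) (C : ℝ)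
    (hC : ∀ t, ∃ s, dist (f (α t)) (α s) ≤ C) :
    ∀ t, ∃ s, dist (f (α t)) (α s) ≤ 2*δ := by
  intro t
  set C' : ℝ := max C 0 with hC'def
  have hC'0 : 0 ≤ C' := le_max_right _ _
  have hCC' : C ≤ C' := le_max_left _ _
  set T : ℝ := |t| + C' + 2*δ + 1 with hTdef
  have habs : 0 ≤ |t| := abs_nonneg t
  have hβ : IsGeodesicLine (fun u => f (α u)) := by
    intro u v
    simp only
    rw [hf.dist_eq, hα]
  obtain ⟨s₁, hs₁⟩ := hC (-T)
  obtain ⟨s₂, hs₂⟩ := hC T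
  obtain ⟨seg, hseg, _, hmem⟩ := line_subsegment hβ (-T) T
  have hpmem : f (α t) ∈ seg := by
    have h1 : min (-T) T ≤ t := le_trans (min_le_left _ _) (by
      rw [hTdef]; linarith [neg_abs_le t])
    have h2 : t ≤ max (-T) T := le_trans (by rw [hTdef]; linarith [le_abs_self t])
      (le_max_right _ _)
    exact hmem t h1 h2
  have h₁ : dist (f (α (-T))) (α s₁) ≤ C' := le_trans hs₁ hCC'
  have h₂ : dist (f (α T)) (α s₂) ≤ C' := le_trans hs₂ hCC'
  rcases quad hgeo hδ hα h₁ h₂ hseg hpmem with hcase | hcase | hcase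
  · exfalso
    have hdist : dist (f (α t)) (f (α (-T))) = |t - (-T)| := hβ t (-T)
    have h3 : t + T ≥ C' + 2*δ + 1 := by rw [hTdef]; linarith [neg_abs_le t]
    have h4 : |t - (-T)| ≥ t + T := by
      have : t - (-T) = t + T := by ring
      rw [this]; exact le_abs_self _
    linarith [hcase, hdist.symm.trans_le (le_of_eq rfl)]
  · exfalso
    have hdist : dist (f (α t)) (f (α T)) = |t - T| := hβ t T
    have h3 : T - t ≥ C' + 2*δ + 1 := by rw [hTdef]; linarith [le_abs_self t]
    have h4 : |t - T| ≥ T - t := by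
      rw [abs_sub_comm]; exact le_abs_self _
    linarith [hcase]
  · exact hcase

lemma near_pow {G X : Type*} [Group G] [MetricSpace X] [MulAction G X] {δ : ℝ}
    (hiso : IsometricAction G X) (hδ0 : 0 ≤ δ) (hgeo : GeodesicSpace X)
    (hδ : DeltaHyperbolic X δ) {α : ℝ → X} (hα : IsGeodesicLine α)
    (g : G) (C : ℝ) (hC : ∀ t, ∃ s, dist (g • α t) (α s) ≤ C) :
    ∀ (n : ℕ) (t : ℝ), ∃ s, dist ((g ^ n) • α t) (α s) ≤ 2*δ := by
  have key : ∀ n : ℕ, ∃ C', ∀ t, ∃ s, dist ((g^n) • α t) (α s) ≤ C' := by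
    intro n
    induction n with
    | zero => exact ⟨0, fun t => ⟨t, by simp⟩⟩
    | succ n ih =>
      obtain ⟨C', hC'⟩ := ih
      refine ⟨C' + C, fun t => ?_⟩
      obtain ⟨s, hs⟩ := hC' t
      obtain ⟨s', hs'⟩ := hC s
      refine ⟨s', ?_⟩
      have e : (g^(n+1)) • α t = g • ((g^n) • α t) := by
        rw [pow_succ', mul_smul]
      calc dist ((g^(n+1)) • α t) (α s')
          ≤ dist ((g^(n+1)) • α t) (g • α s) + dist (g • α s) (α s') :=
            dist_triangle _ _ _
        _ ≤ C' + C := by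
            have h1 : dist ((g^(n+1)) • α t) (g • α s) = dist ((g^n) • α t) (α s) := by
              rw [e, smul_dist' hiso]
            linarith [hs, hs']
  intro n
  obtain ⟨C', hC'⟩ := key n
  exact near_of_bounded hδ0 hgeo hδ hα (fun x => (g^n) • x) (hiso (g^n)) C' hC'

lemma no_reversal {G X : Type*} [Group G] [MetricSpace X] [MulAction G X] {δ : ℝ}
    (hiso : IsometricAction G X) {α : ℝ → X} (hα : IsGeodesicLine α) (hδ0 : 0 ≤ δ)
    (g : G) (τ : ℝ) (hτ : HasTransLength X g τ) (hτ0 : 0 < τ)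
    (φ : ℕ → ℝ → ℝ) (hφ : ∀ (n : ℕ) (t : ℝ), dist ((g ^ n) • α t) (α (φ n t)) ≤ 2 * δ)
    (hlin1 : ∀ t : ℝ, |φ 1 t - (-1 * t + φ 1 0)| ≤ 20 * δ) : False := by
  set d : ℕ → ℝ := fun n => φ n 0 with hd
  set D : ℝ := dist (g • α 0) (α 0) with hD
  have hD0 : 0 ≤ D := dist_nonneg
  have comp : ∀ n : ℕ, |d (n+1) - φ 1 (d n)| ≤ 6 * δ := by
    intro n
    have h1 : dist ((g^(n+1)) • α 0) (α (d (n+1))) ≤ 2*δ := hφ (n+1) 0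
    have h2 : dist ((g^(n+1)) • α 0) ((g^1) • α (d n)) ≤ 2*δ := by
      have e : (g^(n+1)) • α 0 = (g^1) • ((g^n) • α 0) := by
        rw [← mul_smul, ← pow_add, add_comm]
      rw [e, smul_dist' hiso]
      exact hφ n 0
    have h3 : dist ((g^1) • α (d n)) (α (φ 1 (d n))) ≤ 2*δ := hφ 1 (d n)
    have h4 : dist (α (d (n+1))) (α (φ 1 (d n))) ≤ 6*δ := by
      calc dist (α (d (n+1))) (α (φ 1 (d n)))
          ≤ dist (α (d (n+1))) ((g^(n+1)) • α 0) + dist ((g^(n+1)) • α 0) ((g^1) • α (d n))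
            + dist ((g^1) • α (d n)) (α (φ 1 (d n))) := dist_triangle4 _ _ _ _
        _ ≤ 6*δ := by rw [dist_comm (α (d (n+1)))]; linarith
    rw [hα] at h4
    exact h4
  have step : ∀ n : ℕ, |d (n+1) + d n - d 1| ≤ 26 * δ := by
    intro n
    have e1 := abs_le.mp (comp n)
    have e2 := abs_le.mp (hlin1 (d n))
    have hd1 : φ 1 0 = d 1 := rfl
    rw [hd1] at e2
    rw [abs_le]
    constructor <;> [linarith [e1.1, e2.1, e1.2, e2.2]; linarith [e1.1, e2.1, e1.2, e2.2]]
  have near : ∀ n : ℕ, |d (n+1) - d n| ≤ D + 4 * δ := by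
    intro n
    have h1 := hφ (n+1) 0
    have h2 := hφ n 0
    have h3 : dist ((g^(n+1)) • α 0) ((g^n) • α 0) = D := by
      have e : (g^(n+1)) • α 0 = (g^n) • (g • α 0) := by
        rw [pow_succ, mul_smul]
      rw [e, smul_dist' hiso]
    have h4 : dist (α (d (n+1))) (α (d n)) ≤ D + 4*δ := by
      calc dist (α (d (n+1))) (α (d n))
          ≤ dist (α (d (n+1))) ((g^(n+1)) • α 0) + dist ((g^(n+1)) • α 0) ((g^n) • α 0)
            + dist ((g^n) • α 0) (α (d n)) := dist_triangle4 _ _ _ _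
        _ ≤ D + 4*δ := by rw [dist_comm (α (d (n+1))), h3]; linarith
    rw [hα] at h4
    exact h4
  set B : ℝ := 26*δ + (D + 4*δ) + |d 1| with hB
  have dbound : ∀ n : ℕ, 2 * |d n| ≤ B := by
    intro n
    have h1 := step n
    have h2 := near n
    calc 2 * |d n| = |2 * d n| := by rw [abs_mul]; norm_num
      _ = |(d (n+1) + d n - d 1) - (d (n+1) - d n) + d 1| := by ring_nf
      _ ≤ |(d (n+1) + d n - d 1) - (d (n+1) - d n)| + |d 1| := abs_add_le _ _
      _ ≤ |d (n+1) + d n - d 1| + |d (n+1) - d n| + |d 1| := by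
          linarith [abs_sub (d (n+1) + d n - d 1) (d (n+1) - d n)]
      _ ≤ B := by rw [hB]; linarith
  have distb : ∀ n : ℕ, dist (α 0) ((g^n) • α 0) ≤ B/2 + 2*δ := by
    intro n
    have h1 : dist (α 0) (α (d n)) = |d n| := by
      rw [hα]; simp
    calc dist (α 0) ((g^n) • α 0)
        ≤ dist (α 0) (α (d n)) + dist (α (d n)) ((g^n) • α 0) := dist_triangle _ _ _
      _ ≤ |d n| + 2*δ := by rw [dist_comm (α (d n))]; linarith [hφ n 0, h1.le, h1.ge]
      _ ≤ B/2 + 2*δ := by linarith [dbound n]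
  -- unboundedness from positive translation length
  have hev : ∀ᶠ n : ℕ in atTop, τ/2 < dist (α 0) ((g^n) • α 0) / (n:ℝ) :=
    (hτ (α 0)).eventually (eventually_gt_nhds (by linarith))
  obtain ⟨N, hN⟩ := eventually_atTop.mp hev
  set m : ℕ := max N (Nat.ceil ((B/2 + 2*δ + 1) * 2 / τ) + 1) with hm
  have hm1 : N ≤ m := le_max_left _ _
  have hmpos : 0 < (m:ℝ) := by
    have : 1 ≤ m := le_trans (Nat.le_add_left 1 _) (le_max_right _ _)
    exact_mod_cast Nat.lt_of_lt_of_le Nat.zero_lt_one this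
  have h5 := hN m hm1
  have h6 : (m:ℝ) * (τ/2) < dist (α 0) ((g^m) • α 0) := by
    rw [lt_div_iff₀ hmpos] at h5
    linarith [h5]
  have h7 : (B/2 + 2*δ + 1) * 2 / τ ≤ (m:ℝ) := by
    have hc : ((Nat.ceil ((B/2 + 2*δ + 1) * 2 / τ) : ℕ) : ℝ) ≥ (B/2 + 2*δ + 1) * 2 / τ :=
      Nat.le_ceil _
    have : (Nat.ceil ((B/2 + 2*δ + 1) * 2 / τ) + 1 : ℕ) ≤ m := le_max_right _ _
    have := (Nat.cast_le (α := ℝ)).mpr this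
    push_cast at this
    linarith
  have h8 : B/2 + 2*δ + 1 ≤ (m:ℝ) * (τ/2) := by
    rw [div_le_iff₀ hτ0] at h7
    nlinarith [h7]
  linarith [distb m, h6, h8]


lemma core_commute {G : Type*} [Group G] {X : Type*} [MetricSpace X] [MulAction G X] {δ : ℝ}
    (hiso : IsometricAction G X) (hgeo : GeodesicSpace X) (hδ : DeltaHyperbolic X δ)
    (hproper : ∀ (x : X) (R : ℝ), {g : G | dist x (g • x) ≤ R}.Finite)
    (a b : G) (τa : ℝ)
    (hτa : HasTransLength X a τa) (ha : 0 < τa)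
    (α : ℝ → X) (hαa : IsQuasiAxis a α) (hαb : IsQuasiAxis b α) :
    ∃ k : ℕ, 0 < k ∧ a * b ^ k = b ^ k * a := by
  obtain ⟨hα, Ca, _, hCa⟩ := hαa
  obtain ⟨_, Cb, _, hCb⟩ := hαb
  have hδ0 : 0 ≤ δ := delta_nonneg (α 0) hgeo hδ
  have NearA := near_pow hiso hδ0 hgeo hδ hα a Ca hCa
  have NearB := near_pow hiso hδ0 hgeo hδ hα b Cb hCb
  choose φA specA using NearA
  choose φB specB using NearB
  -- the coarse map of a is coarsely linear
  have H1 : ∀ t u : ℝ, abs (|φA 1 t - φA 1 u| - |t - u|) ≤ 4 * δ := by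
    intro t u
    have h1 := specA 1 t
    have h2 := specA 1 u
    have h3 : dist ((a^1) • α t) ((a^1) • α u) = |t - u| := by
      rw [smul_dist' hiso, hα]
    have up : |φA 1 t - φA 1 u| ≤ |t - u| + 4*δ := by
      rw [← hα]
      calc dist (α (φA 1 t)) (α (φA 1 u))
          ≤ dist (α (φA 1 t)) ((a^1) • α t) + dist ((a^1) • α t) ((a^1) • α u)
            + dist ((a^1) • α u) (α (φA 1 u)) := dist_triangle4 _ _ _ _
        _ ≤ |t - u| + 4*δ := by rw [dist_comm (α (φA 1 t)), h3]; linarith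
    have lo : |t - u| ≤ |φA 1 t - φA 1 u| + 4*δ := by
      rw [← hα]
      calc dist (α t) (α u) = dist ((a^1) • α t) ((a^1) • α u) :=
            (smul_dist' hiso (a^1) (α t) (α u)).symm
        _ ≤ dist ((a^1) • α t) (α (φA 1 t)) + dist (α (φA 1 t)) (α (φA 1 u))
            + dist (α (φA 1 u)) ((a^1) • α u) := dist_triangle4 _ _ _ _
        _ ≤ |φA 1 t - φA 1 u| + 4*δ := by
            rw [dist_comm (α (φA 1 u)), hα] ; linarith
    rw [abs_le]; constructor <;> linarith
  obtain ⟨ε, hε, hlin⟩ := coarse_linear hδ0 (φA 1) H1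
  rcases hε with rfl | rfl
  · -- ε = 1 : the real case
    set x : X := α 0 with hx
    set cA : ℝ := φA 1 0 with hcA
    set M : ℝ := 26*δ + |cA| with hM
    have key : ∀ n : ℕ, dist x (((b ^ n)⁻¹ * a * b ^ n) • x) ≤ M := by
      intro n
      have e1 : ((b^n)⁻¹ * a * b^n) • x = (b^n)⁻¹ • (a • ((b^n) • x)) := by
        rw [mul_smul, mul_smul]
      have e2 : dist x (((b^n)⁻¹ * a * b^n) • x) = dist ((b^n) • x) (a • ((b^n) • x)) := by
        rw [e1, ← smul_dist' hiso (b^n) x ((b^n)⁻¹ • (a • ((b^n) • x))), smul_inv_smul]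
      rw [e2]
      have s1 : dist ((b^n) • x) (α (φB n 0)) ≤ 2*δ := specB n 0
      have s2 : dist (a • α (φB n 0)) (α (φA 1 (φB n 0))) ≤ 2*δ := by
        have := specA 1 (φB n 0)
        rwa [pow_one] at this
      have s3 : dist (a • ((b^n) • x)) (a • α (φB n 0)) ≤ 2*δ := by
        rw [smul_dist' hiso]; exact s1
      have s4 : dist (α (φB n 0)) (α (φA 1 (φB n 0))) ≤ 20*δ + |cA| := by
        rw [hα]
        have h6 := abs_le.mp (hlin (φB n 0))
        rw [abs_le]
        constructor <;>
          [linarith [h6.1, h6.2, le_abs_self cA, neg_abs_le cA];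
           linarith [h6.1, h6.2, le_abs_self cA, neg_abs_le cA]]
      calc dist ((b^n) • x) (a • ((b^n) • x))
          ≤ dist ((b^n) • x) (α (φB n 0)) + dist (α (φB n 0)) (α (φA 1 (φB n 0)))
            + dist (α (φA 1 (φB n 0))) (a • α (φB n 0))
            + dist (a • α (φB n 0)) (a • ((b^n) • x)) := by
              exact dist_triangle4 _ _ _ _ |>.trans (by
                gcongr
                exact dist_triangle _ _ _ )
        _ ≤ M := by
            rw [hM]
            linarith [s1, s2, s3, s4,
              dist_comm (α (φA 1 (φB n 0))) (a • α (φB n 0)),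
              dist_comm (a • α (φB n 0)) (a • ((b^n) • x))]
    -- pigeonhole
    set e : ℕ → G := fun n => (b ^ n)⁻¹ * a * b ^ n with he
    have hmem : ∀ n, e n ∈ {g : G | dist x (g • x) ≤ M} := fun n => key n
    have hninj : ¬ Function.Injective e := by
      intro hinj
      exact (hproper x M).not_infinite (Set.infinite_of_injective_forall_mem hinj hmem)
    rw [Function.not_injective_iff] at hninj
    obtain ⟨n, m, heq, hnm⟩ := hninj
    have main : ∀ n m : ℕ, n < m → e n = e m → ∃ k : ℕ, 0 < k ∧ a * b ^ k = b ^ k * a := by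
      intro n m hlt heq
      refine ⟨m - n, Nat.sub_pos_of_lt hlt, ?_⟩
      have hbm : b ^ m = b ^ (m - n) * b ^ n := by
        rw [← pow_add, Nat.sub_add_cancel hlt.le]
      rw [he] at heq
      simp only at heq
      rw [hbm] at heq
      have h9 := congrArg (fun z => b^(m-n) * b^n * z * (b^n)⁻¹) heq
      try simp only at h9
      have L : b^(m-n) * b^n * ((b^n)⁻¹ * a * b^n) * (b^n)⁻¹ = b^(m-n) * a := by group
      have R : b^(m-n) * b^n * ((b^(m-n) * b^n)⁻¹ * a * (b^(m-n) * b^n)) * (b^n)⁻¹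
          = a * b^(m-n) := by group
      rw [L, R] at h9
      exact h9.symm
    rcases Nat.lt_or_ge n m with h | h
    · exact main n m h heq
    · have hlt : m < n := lt_of_le_of_ne h (fun hh => hnm hh.symm)
      exact main m n hlt heq.symm
  · -- ε = -1 : impossible
    exact absurd (no_reversal hiso hα hδ0 a τa hτa ha φA specA
      (fun t => hlin t)) (fun h => h)

/-- If `G` acts properly by isometries on a `δ`-hyperbolic graph and two
hyperbolic elements `a`, `b` share a common geodesic quasi-axis `α`, then some positive
powers commute: `[a, bᵏ] = 1` and `[b, aˡ] = 1`. -/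
theorem common_axis_implies_commuting_powers
    {G : Type*} [Group G] {X : Type*} [MetricSpace X] [MulAction G X] {δ : ℝ}
    (hiso : IsometricAction G X) (hgeo : GeodesicSpace X) (hδ : DeltaHyperbolic X δ)
    (hproper : ∀ (x : X) (R : ℝ), {g : G | dist x (g • x) ≤ R}.Finite)
    (a b : G) (τa τb : ℝ)
    (hτa : HasTransLength X a τa) (ha : 0 < τa)
    (hτb : HasTransLength X b τb) (hb : 0 < τb)
    (α : ℝ → X) (hαa : IsQuasiAxis a α) (hαb : IsQuasiAxis b α) :
    ∃ k l : ℕ, 0 < k ∧ 0 < l ∧ a * b ^ k = b ^ k * a ∧ b * a ^ l = a ^ l * b := by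
  obtain ⟨k, hk, hk2⟩ := core_commute hiso hgeo hδ hproper a b τa hτa ha α hαa hαb
  obtain ⟨l, hl, hl2⟩ := core_commute hiso hgeo hδ hproper b a τb hτb hb α hαb hαa
  exact ⟨k, l, hk, hl, hk2, hl2⟩
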